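/- Let k be an algebraically closed field of characteristic p > 0 and let G = SL_p(k) act by conjugation on W = End(k^p). Then for every semisimple g ∈ G, dim C_W(g) ≥ p, and consequently for the irreducible composition factor V of W of dimension p^2 − 2, every element g ∈ G satisfies dim C_V(g) ≥ p − 2. -/

import Mathlib

open Module LinearMap

universe u v

section Aux

variable {k : Type u} [Field k]

/-- The "commutator with `a`" map on a `k`-algebra. -/
noncomputable def centMap (R : Type*) [Ring R] [Algebra k R] (a : R) : R →ₗ[k] R :=
  LinearMap.mulLeft k a - LinearMap.mulRight k a

lemma mem_ker_centMap {R : Type*} [Ring R] [Algebra k R] {a x : R} :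
    x ∈ LinearMap.ker (centMap (k := k) R a) ↔ a * x = x * a := by
  simp [centMap, LinearMap.mem_ker, sub_eq_zero]

variable {V : Type v} [AddCommGroup V] [Module k V]

variable [FiniteDimensional k V]

lemma pow_mem_invariant {f : Module.End k V} {U : Submodule k V}
    (hU : ∀ x ∈ U, f x ∈ U) (m : ℕ) {x : V} (hx : x ∈ U) : (f ^ m) x ∈ U := by
  induction m with
  | zero => simpa using hx
  | succ n ih =>
      have : (f ^ (n + 1)) x = f ((f ^ n) x) := by
        rw [pow_succ' f n]; rfl
      rw [this]
      exact hU _ ih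

lemma exists_invariant_compl (f : Module.End k V) (q : ℕ) (hq1 : 1 ≤ q)
    (hq : f ^ q = 0) (v : V) (hv : (f ^ (q - 1)) v ≠ 0) :
    ∃ U : Submodule k V,
      IsCompl (Submodule.span k (Set.range fun i : Fin q => (f ^ (i : ℕ)) v)) U ∧
      ∀ x ∈ U, f x ∈ U := by
  classical
  set W := Submodule.span k (Set.range fun i : Fin q => (f ^ (i : ℕ)) v) with hWdef
  have hgen : ∀ i : Fin q, (f ^ (i : ℕ)) v ∈ W := fun i =>
    Submodule.subset_span ⟨i, rfl⟩
  -- high powers kill v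
  have hkill : ∀ m, q ≤ m → (f ^ m) v = 0 := by
    intro m hm
    have : f ^ m = f ^ (m - q) * f ^ q := by rw [← pow_add]; congr 1; omega
    rw [this, hq, mul_zero]; rfl
  obtain ⟨U, ⟨hUinv, hUW⟩, hmax⟩ :=
    (set_has_maximal_iff_noetherian.mpr inferInstance)
      {U : Submodule k V | (∀ x ∈ U, f x ∈ U) ∧ U ⊓ W = ⊥}
      ⟨⊥, fun x hx => by simp_all, bot_inf_eq W⟩
  have hsup : U ⊔ W = ⊤ := by
    by_contra hne
    obtain ⟨z₀, hz₀⟩ : ∃ z₀, z₀ ∉ U ⊔ W := by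
      by_contra h; push_neg at h
      exact hne (Submodule.eq_top_iff'.mpr h)
    have hex : ∃ m, (f ^ m) z₀ ∈ U ⊔ W := ⟨q, by simp [hq]⟩
    set j := Nat.find hex with hjdef
    have hj0 : j ≠ 0 := by
      intro h
      apply hz₀
      have h2 := Nat.find_spec hex
      rw [← hjdef, h, pow_zero] at h2
      simpa using h2
    set z := (f ^ (j - 1)) z₀ with hzdef
    have hz_not : z ∉ U ⊔ W := Nat.find_min hex (by omega)
    have hfz : f z ∈ U ⊔ W := by
      have hz' : f z = (f ^ j) z₀ := by
        rw [hzdef, ← Module.End.mul_apply, ← pow_succ']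
        congr 2
        omega
      rw [hz']
      exact Nat.find_spec hex
    obtain ⟨u, hu, w, hw, huw⟩ := Submodule.mem_sup.mp hfz
    obtain ⟨c, hc⟩ := (Submodule.mem_span_range_iff_exists_fun k).mp hw
    set i0 : Fin q := ⟨0, hq1⟩ with hi0def
    -- apply f^(q-1) to f z = u + w
    have hfq : (f ^ (q - 1)) (f z) = 0 := by
      rw [← Module.End.mul_apply, ← pow_succ]
      have : q - 1 + 1 = q := by omega
      rw [this, hq]; rfl
    have hsum : (f ^ (q - 1)) w = c i0 • (f ^ (q - 1)) v := by
      rw [← hc, map_sum]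
      rw [Finset.sum_eq_single i0]
      · simp [hi0def]
      · intro i _ hi
        rw [map_smul, ← Module.End.mul_apply, ← pow_add]
        have : (f ^ (q - 1 + (i : ℕ))) v = 0 := by
          apply hkill
          have : (i : ℕ) ≠ 0 := fun h => hi (Fin.ext (by simp [h, hi0def]))
          omega
        rw [this, smul_zero]
      · intro h
        exact absurd (Finset.mem_univ _) h
    have key : (f ^ (q - 1)) u + c i0 • (f ^ (q - 1)) v = 0 := by
      rw [← hsum, ← map_add, huw, hfq]
    have hc0 : c i0 = 0 := by
      have h1 : (f ^ (q - 1)) u ∈ U := pow_mem_invariant hUinv _ hu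
      have h2 : (f ^ (q - 1)) u ∈ W := by
        have : (f ^ (q - 1)) u = -(c i0 • (f ^ (q - 1)) v) := by
          rw [eq_neg_iff_add_eq_zero]; exact key
        rw [this]
        exact neg_mem (Submodule.smul_mem _ _ (by
          simpa using hgen ⟨q - 1, by omega⟩))
      have : (f ^ (q - 1)) u ∈ U ⊓ W := ⟨h1, h2⟩
      rw [hUW] at this
      have hz0 : c i0 • (f ^ (q - 1)) v = 0 := by
        have := key
        rw [Submodule.mem_bot] at *
        simp_all
      rcases smul_eq_zero.mp hz0 with h | h
      · exact h
      · exact absurd h hv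
    set w' := ∑ i : Fin q, c i • (f ^ ((i : ℕ) - 1)) v with hw'def
    have hw'W : w' ∈ W := by
      apply Submodule.sum_mem
      intro i _
      exact Submodule.smul_mem _ _ (by
        simpa using hgen ⟨(i : ℕ) - 1, by omega⟩)
    have hfw' : f w' = w := by
      rw [hw'def, map_sum, ← hc]
      apply Finset.sum_congr rfl
      intro i _
      rw [map_smul]
      by_cases h0 : (i : ℕ) = 0
      · have : i = i0 := Fin.ext (by simp [h0, hi0def])
        rw [this, hc0, zero_smul, zero_smul]
      · congr 1
        rw [← Module.End.mul_apply, ← pow_succ']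
        congr 2
        omega
    set z' := z - w' with hz'def
    have hfz' : f z' ∈ U := by
      have : f z' = u := by
        rw [hz'def, map_sub, hfw', ← huw]
        abel
      rw [this]; exact hu
    have hz'_not : z' ∉ U ⊔ W := by
      intro h
      apply hz_not
      have : z = z' + w' := by rw [hz'def]; abel
      rw [this]
      exact add_mem h (le_sup_right (α := Submodule k V) hw'W)
    set U' := U ⊔ Submodule.span k {z'} with hU'def
    have hU'inv : ∀ x ∈ U', f x ∈ U' := by
      intro x hx
      obtain ⟨a, ha, b, hb, hab⟩ := Submodule.mem_sup.mp hx
      obtain ⟨d, hd⟩ := Submodule.mem_span_singleton.mp hb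
      have : f x = f a + d • f z' := by rw [← hab, map_add, ← hd, map_smul]
      rw [this]
      exact le_sup_left (α := Submodule k V)
        (add_mem (hUinv _ ha) (Submodule.smul_mem _ _ hfz'))
    have hU'W : U' ⊓ W = ⊥ := by
      rw [eq_bot_iff]
      rintro x ⟨hx1, hx2⟩
      obtain ⟨a, ha, b, hb, hab⟩ := Submodule.mem_sup.mp hx1
      obtain ⟨d, hd⟩ := Submodule.mem_span_singleton.mp hb
      by_cases hd0 : d = 0
      · have hxa : x = a := by rw [← hab, ← hd, hd0, zero_smul, add_zero]
        have : x ∈ U ⊓ W := ⟨hxa ▸ ha, hx2⟩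
        rwa [hUW] at this
      · exfalso
        apply hz'_not
        have : z' = d⁻¹ • (x - a) := by
          rw [← hab, ← hd]
          rw [add_sub_cancel_left, smul_smul, inv_mul_cancel₀ hd0, one_smul]
        rw [this]
        exact Submodule.smul_mem _ _ (sub_mem
          (le_sup_right (α := Submodule k V) hx2)
          (le_sup_left (α := Submodule k V) ha))
    have hlt : U < U' := by
      refine lt_of_le_of_ne le_sup_left (fun h => hz'_not ?_)
      have hz'U' : z' ∈ U' := le_sup_right (α := Submodule k V)
        (Submodule.mem_span_singleton_self z')
      rw [← h] at hz'U'
      exact le_sup_left (α := Submodule k V) hz'U'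
    exact hmax U' ⟨hU'inv, hU'W⟩ hlt
  refine ⟨U, ⟨disjoint_iff.mpr ?_, codisjoint_iff.mpr ?_⟩, hUinv⟩
  · rw [inf_comm]; exact hUW
  · rw [sup_comm]; exact hsup


lemma block_le (A : Module.End k V) {U U' : Submodule k V} (h : IsCompl U U')
    (hU : ∀ x ∈ U, A x ∈ U) (hU' : ∀ x ∈ U', A x ∈ U') :
    finrank k (LinearMap.ker (centMap (k := k) (Module.End k ↥U) (A.restrict hU)))
      + finrank k (LinearMap.ker (centMap (k := k) (Module.End k ↥U') (A.restrict hU')))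
      ≤ finrank k (LinearMap.ker (centMap (k := k) (Module.End k V) A)) := by
  set e := Submodule.prodEquivOfIsCompl U U' h with hedef
  set P : Module.End k (↥U × ↥U') := (A.restrict hU).prodMap (A.restrict hU') with hPdef
  have hconjP : e.conj P = A := by
    apply LinearMap.ext
    intro x
    rw [LinearEquiv.conj_apply_apply]
    obtain ⟨z, rfl⟩ := e.surjective x
    rw [LinearEquiv.symm_apply_apply]
    obtain ⟨u, u'⟩ := z
    simp [hedef, hPdef, LinearMap.prodMap_apply, Submodule.coe_prodEquivOfIsCompl', map_add,
      LinearMap.restrict_coe_apply]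
  have hconj_mul : ∀ f g : Module.End k (↥U × ↥U'), e.conj (f * g) = e.conj f * e.conj g :=
    fun f g => LinearEquiv.conj_comp e g f
  -- the two embeddings
  set Ψ₁ : Module.End k ↥U →ₗ[k] Module.End k V :=
    (e.conj.toLinearMap).comp ((LinearMap.prodMapLinear k ↥U ↥U' ↥U ↥U' k).comp
      (LinearMap.inl k _ _)) with hΨ₁
  set Ψ₂ : Module.End k ↥U' →ₗ[k] Module.End k V :=
    (e.conj.toLinearMap).comp ((LinearMap.prodMapLinear k ↥U ↥U' ↥U ↥U' k).comp
      (LinearMap.inr k _ _)) with hΨ₂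
  have hΨ₁app : ∀ x, Ψ₁ x = e.conj (x.prodMap 0) := fun x => rfl
  have hΨ₂app : ∀ y, Ψ₂ y = e.conj ((0 : Module.End k ↥U).prodMap y) := fun y => rfl
  have hinj₁ : Function.Injective Ψ₁ := by
    intro x y hxy
    rw [hΨ₁app, hΨ₁app] at hxy
    have := e.conj.injective hxy
    ext u
    have := congrArg (fun F => F (u, 0)) this
    simpa using congrArg Prod.fst this
  have hinj₂ : Function.Injective Ψ₂ := by
    intro x y hxy
    rw [hΨ₂app, hΨ₂app] at hxy
    have := e.conj.injective hxy
    ext u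
    have := congrArg (fun F => F (0, u)) this
    simpa using congrArg Prod.snd this
  set c1 := LinearMap.ker (centMap (k := k) (Module.End k ↥U) (A.restrict hU))
  set c2 := LinearMap.ker (centMap (k := k) (Module.End k ↥U') (A.restrict hU'))
  set M1 := Submodule.map Ψ₁ c1
  set M2 := Submodule.map Ψ₂ c2
  have hM1 : M1 ≤ LinearMap.ker (centMap (k := k) (Module.End k V) A) := by
    rintro y hy
    obtain ⟨x, hx, rfl⟩ := Submodule.mem_map.mp hy
    replace hx := mem_ker_centMap.mp hx
    apply mem_ker_centMap.mpr
    rw [hΨ₁app, ← hconjP, ← hconj_mul, ← hconj_mul]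
    congr 1
    rw [hPdef, LinearMap.prodMap_mul, LinearMap.prodMap_mul, hx, mul_zero, zero_mul]
  have hM2 : M2 ≤ LinearMap.ker (centMap (k := k) (Module.End k V) A) := by
    rintro y' hy'
    obtain ⟨y, hy, rfl⟩ := Submodule.mem_map.mp hy'
    replace hy := mem_ker_centMap.mp hy
    apply mem_ker_centMap.mpr
    rw [hΨ₂app, ← hconjP, ← hconj_mul, ← hconj_mul]
    congr 1
    rw [hPdef, LinearMap.prodMap_mul, LinearMap.prodMap_mul, hy, mul_zero, zero_mul]
  have hdisj : M1 ⊓ M2 = ⊥ := by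
    rw [eq_bot_iff]
    rintro x ⟨⟨a, _, ha⟩, ⟨b, _, hb⟩⟩
    have : e.conj (a.prodMap 0) = e.conj ((0 : Module.End k ↥U).prodMap b) := by
      rw [← hΨ₁app, ← hΨ₂app, ha, hb]
    have h2 := e.conj.injective this
    have ha0 : a = 0 := by
      ext u
      have := congrArg (fun F => F (u, 0)) h2
      simpa using congrArg Prod.fst this
    rw [Submodule.mem_bot, ← ha, ha0]
    exact map_zero Ψ₁
  have hrank1 : finrank k M1 = finrank k c1 :=
    (LinearEquiv.finrank_eq (Submodule.equivMapOfInjective Ψ₁ hinj₁ c1)).symm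
  have hrank2 : finrank k M2 = finrank k c2 :=
    (LinearEquiv.finrank_eq (Submodule.equivMapOfInjective Ψ₂ hinj₂ c2)).symm
  have hsum := Submodule.finrank_sup_add_finrank_inf_eq M1 M2
  rw [hdisj] at hsum
  have hle : finrank k ↥(M1 ⊔ M2) ≤
      finrank k (LinearMap.ker (centMap (k := k) (Module.End k V) A)) :=
    Submodule.finrank_mono (sup_le hM1 hM2)
  simp only [finrank_bot] at hsum
  omega

lemma nilp_cent : ∀ (n : ℕ) (V : Type v) [AddCommGroup V] [Module k V]
    [FiniteDimensional k V] (f : Module.End k V), IsNilpotent f → finrank k V ≤ n →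
    finrank k V ≤ finrank k (LinearMap.ker (centMap (k := k) (Module.End k V) f)) := by
  intro n
  induction n with
  | zero =>
      intro V _ _ _ f _ hle
      exact (Nat.le_zero.mp hle) ▸ Nat.zero_le _
  | succ n ih =>
      intro V _ _ _ f hnil hle
      by_cases hn : finrank k V ≤ n
      · exact ih V f hnil hn
      classical
      have hdim : finrank k V = n + 1 := by omega
      have hnt : Nontrivial V := Module.nontrivial_of_finrank_pos (R := k) (by omega)
      have hex : ∃ m, f ^ m = 0 := hnil
      set q := Nat.find hex with hqdef
      have hq : f ^ q = 0 := Nat.find_spec hex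
      have hq1 : 1 ≤ q := by
        rcases Nat.eq_zero_or_pos q with h0 | h
        · exfalso
          obtain ⟨w, hw⟩ := exists_ne (0 : V)
          have h1 : f ^ q = 0 := hq
          rw [h0, pow_zero] at h1
          exact hw (by calc w = (1 : Module.End k V) w := rfl
            _ = (0 : Module.End k V) w := by rw [h1]
            _ = 0 := rfl)
        · exact h
      have hlt' : f ^ (q - 1) ≠ 0 := Nat.find_min hex (by omega)
      obtain ⟨v, hv⟩ := DFunLike.ne_iff.mp hlt'
      have hv : (f ^ (q - 1)) v ≠ 0 := by simpa using hv
      -- high powers kill v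
      have hkill : ∀ m, q ≤ m → (f ^ m) v = 0 := by
        intro m hm
        have : f ^ m = f ^ (m - q) * f ^ q := by rw [← pow_add]; congr 1; omega
        rw [this, hq, mul_zero]; rfl
      -- linear independence of the cyclic vectors
      have hli : LinearIndependent k (fun i : Fin q => (f ^ (i : ℕ)) v) := by
        rw [Fintype.linearIndependent_iff]
        intro c hc
        by_contra hne
        push_neg at hne
        obtain ⟨i₀, hi₀⟩ := hne
        have hexj : ∃ m : ℕ, ∃ hm : m < q, c ⟨m, hm⟩ ≠ 0 :=
          ⟨i₀, i₀.isLt, by simpa using hi₀⟩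
        set j := Nat.find hexj with hjdef
        obtain ⟨hjq, hcj⟩ := Nat.find_spec hexj
        have hmin : ∀ m (hm : m < q), m < j → c ⟨m, hm⟩ = 0 := by
          intro m hm hmj
          by_contra hc'
          exact (Nat.find_min hexj hmj) ⟨hm, hc'⟩
        have happ := congrArg (fun x => (f ^ (q - 1 - j)) x) hc
        simp only [map_sum, map_smul, map_zero] at happ
        rw [Finset.sum_eq_single (⟨j, hjq⟩ : Fin q)] at happ
        · apply hcj
          have hj1 : (f ^ (q - 1 - j)) ((f ^ j) v) = (f ^ (q - 1)) v := by
            rw [← Module.End.mul_apply, ← pow_add]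
            congr 2
            omega
          rw [hj1] at happ
          rcases smul_eq_zero.mp happ with h | h
          · exact h
          · exact absurd h hv
        · intro i _ hi
          rcases lt_or_gt_of_ne (fun h : (i : ℕ) = j => hi (Fin.ext (by simpa using h))) with
            hlt | hgt
          · rw [hmin i i.isLt hlt, zero_smul]
          · rw [← Module.End.mul_apply, ← pow_add, hkill _ (by omega), smul_zero]
        · intro h
          exact absurd (Finset.mem_univ _) h
      set W := Submodule.span k (Set.range fun i : Fin q => (f ^ (i : ℕ)) v) with hWdef
      have hgen : ∀ i : Fin q, (f ^ (i : ℕ)) v ∈ W := fun i => Submodule.subset_span ⟨i, rfl⟩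
      have hWinv : ∀ x ∈ W, f x ∈ W := by
        intro x hx
        have : W.map f ≤ W := by
          rw [hWdef, Submodule.map_span, Submodule.span_le]
          rintro _ ⟨_, ⟨i, rfl⟩, rfl⟩
          by_cases hiq : (i : ℕ) + 1 < q
          · have : f ((f ^ (i : ℕ)) v) = (f ^ ((i : ℕ) + 1)) v := by
              rw [← Module.End.mul_apply, ← pow_succ']
            rw [this]
            exact hgen ⟨(i : ℕ) + 1, hiq⟩
          · have : f ((f ^ (i : ℕ)) v) = (f ^ ((i : ℕ) + 1)) v := by
              rw [← Module.End.mul_apply, ← pow_succ']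
            rw [this, hkill _ (by omega)]
            exact Submodule.zero_mem W
        exact this (Submodule.mem_map_of_mem hx)
      have hWrank : finrank k ↥W = q := by
        rw [hWdef, finrank_span_eq_card hli, Fintype.card_fin]
      obtain ⟨U, hcompl, hUinv⟩ := exists_invariant_compl f q hq1 hq v hv
      rw [← hWdef] at hcompl
      have hsum := Submodule.finrank_add_eq_of_isCompl hcompl
      rw [hWrank] at hsum
      -- bound for the cyclic part
      set fW := f.restrict hWinv with hfWdef
      have hcoeW : ∀ (m : ℕ) (x : ↥W), (((fW ^ m) x : ↥W) : V) = (f ^ m) (x : V) := by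
        intro m x
        rw [hfWdef, Module.End.pow_restrict]
        exact LinearMap.restrict_coe_apply _ _ _
      have hvW : v ∈ W := by
        have := hgen ⟨0, by omega⟩
        simpa using this
      have hGli : LinearIndependent k (fun i : Fin q => (fW ^ (i : ℕ))) := by
        rw [Fintype.linearIndependent_iff]
        intro c hc
        have happ := congrArg (fun g : Module.End k ↥W => ((g ⟨v, hvW⟩ : ↥W) : V)) hc
        simp only [LinearMap.sum_apply, LinearMap.smul_apply, LinearMap.zero_apply,
          AddSubmonoidClass.coe_finset_sum, SetLike.val_smul, ZeroMemClass.coe_zero] at happ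
        have : ∑ i : Fin q, c i • (f ^ (i : ℕ)) v = 0 := by
          rw [← happ]
          apply Finset.sum_congr rfl
          intro i _
          rw [hcoeW]
        exact Fintype.linearIndependent_iff.mp hli c this
      have hWbound : q ≤ finrank k
          (LinearMap.ker (centMap (k := k) (Module.End k ↥W) fW)) := by
        have hspan : Submodule.span k (Set.range fun i : Fin q => (fW ^ (i : ℕ)))
            ≤ LinearMap.ker (centMap (k := k) (Module.End k ↥W) fW) := by
          rw [Submodule.span_le]
          rintro _ ⟨i, rfl⟩
          apply mem_ker_centMap.mpr
          exact (pow_mul_comm' fW (i : ℕ)).symm ▸ (pow_mul_comm' fW (i : ℕ))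
        have := Submodule.finrank_mono hspan
        rwa [finrank_span_eq_card hGli, Fintype.card_fin] at this
      -- bound for the complement
      set fU := f.restrict hUinv with hfUdef
      have hfUnil : IsNilpotent fU := by
        refine ⟨q, ?_⟩
        ext x
        rw [hfUdef, Module.End.pow_restrict, LinearMap.restrict_coe_apply]
        simp [hq]
      have hUle : finrank k ↥U ≤ n := by omega
      have hUbound := ih ↥U fU hfUnil hUle
      have hblock := block_le f hcompl hWinv hUinv
      rw [← hfWdef, ← hfUdef] at hblock
      have hgoal : finrank k V ≤ finrank k ↥(ker (centMap (k := k) (Module.End k V) f)) := by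
        omega
      exact hgoal

lemma cent_dim_ge [IsAlgClosed k] : ∀ (n : ℕ) (V : Type v) [AddCommGroup V] [Module k V]
    [FiniteDimensional k V] (A : Module.End k V), finrank k V ≤ n →
    finrank k V ≤ finrank k (LinearMap.ker (centMap (k := k) (Module.End k V) A)) := by
  intro n
  induction n with
  | zero =>
      intro V _ _ _ A hle
      exact (Nat.le_zero.mp hle) ▸ Nat.zero_le _
  | succ n ih =>
      intro V _ _ _ A hle
      by_cases hn : finrank k V ≤ n
      · exact ih V A hn
      have hdim : finrank k V = n + 1 := by omega
      have hnt : Nontrivial V := Module.nontrivial_of_finrank_pos (R := k) (by omega)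
      obtain ⟨μ, hμ⟩ := Module.End.exists_eigenvalue A
      set g := A - algebraMap k (Module.End k V) μ with hgdef
      have hcent_eq : centMap (k := k) (Module.End k V) A
          = centMap (k := k) (Module.End k V) g := by
        apply LinearMap.ext
        intro x
        simp only [centMap, LinearMap.sub_apply, LinearMap.mulLeft_apply,
          LinearMap.mulRight_apply, hgdef, sub_mul, mul_sub,
          Algebra.algebraMap_eq_smul_one, smul_mul_assoc, mul_smul_comm, one_mul, mul_one]
        abel
      set d := finrank k V with hddef
      by_cases hgnil : g ^ d = 0
      · rw [hcent_eq]
        exact nilp_cent (n + 1) V g ⟨d, hgnil⟩ hle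
      · set V₁ := LinearMap.ker (g ^ d) with hV₁def
        set V₂ := LinearMap.range (g ^ d) with hV₂def
        have hdisj : V₁ ⊓ V₂ = ⊥ := by
          rw [eq_bot_iff]
          rintro x ⟨hx1, hx2⟩
          obtain ⟨y, hy⟩ := hx2
          have hy2 : y ∈ LinearMap.ker (g ^ (d + d)) := by
            rw [LinearMap.mem_ker, pow_add, Module.End.mul_apply, hy]
            exact LinearMap.mem_ker.mp hx1
          rw [Module.End.ker_pow_eq_ker_pow_finrank_of_le (by omega), ← hddef, ← hV₁def] at hy2
          rw [Submodule.mem_bot, ← hy]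
          exact LinearMap.mem_ker.mp hy2
        have hrk := LinearMap.finrank_range_add_finrank_ker (g ^ d)
        rw [← hV₁def, ← hV₂def] at hrk
        have hsup : V₁ ⊔ V₂ = ⊤ := by
          apply Submodule.eq_top_of_finrank_eq
          have h2 := Submodule.finrank_sup_add_finrank_inf_eq V₁ V₂
          rw [hdisj] at h2
          simp only [finrank_bot, add_zero] at h2
          omega
        have hcompl : IsCompl V₁ V₂ := ⟨disjoint_iff.mpr hdisj, codisjoint_iff.mpr hsup⟩
        have hcomm : A * g ^ d = g ^ d * A := by
          have hAg : Commute A g := by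
            rw [hgdef]
            exact (Commute.refl A).sub_right (Algebra.commute_algebraMap_right μ A)
          exact (hAg.pow_right d).eq
        have hV₁inv : ∀ x ∈ V₁, A x ∈ V₁ := by
          intro x hx
          rw [hV₁def, LinearMap.mem_ker] at *
          rw [← Module.End.mul_apply, ← hcomm, Module.End.mul_apply, hx, map_zero]
        have hV₂inv : ∀ x ∈ V₂, A x ∈ V₂ := by
          intro x hx
          rw [hV₂def, LinearMap.mem_range] at *
          obtain ⟨y, hy⟩ := hx
          exact ⟨A y, by rw [← Module.End.mul_apply, ← hcomm, Module.End.mul_apply, hy]⟩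
        have h1ne : V₁ ≠ ⊥ := by
          obtain ⟨w, hw⟩ := hμ.exists_hasEigenvector
          have hgw : g w = 0 := by
            rw [hgdef]
            simp only [LinearMap.sub_apply, Algebra.algebraMap_eq_smul_one,
              LinearMap.smul_apply, Module.End.one_apply]
            rw [hw.apply_eq_smul, sub_self]
          have hwV₁ : w ∈ V₁ := by
            rw [hV₁def, LinearMap.mem_ker]
            have : g ^ d = g ^ (d - 1) * g := by
              rw [← pow_succ]
              congr 1
              omega
            rw [this, Module.End.mul_apply, hgw, map_zero]
          exact Submodule.ne_bot_iff _ |>.mpr ⟨w, hwV₁, hw.right⟩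
        have h1netop : V₁ ≠ ⊤ := by
          intro h
          apply hgnil
          rw [← LinearMap.ker_eq_top, ← hV₁def]
          exact h
        have hd1 : finrank k V₁ < d := by
          rw [hddef]
          exact Submodule.finrank_lt h1netop
        have hd1pos : finrank k ↥V₁ ≠ 0 :=
          fun h => h1ne (Submodule.finrank_eq_zero.mp h)
        have hc1 := ih ↥V₁ (A.restrict hV₁inv) (by omega)
        have hc2 := ih ↥V₂ (A.restrict hV₂inv) (by omega)
        have hblock := block_le A hcompl hV₁inv hV₂inv
        omega

/-- rank-nullity for a restriction -/
lemma finrank_map_add_finrank_inf_ker {M N : Type*} [AddCommGroup M] [Module k M]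
    [AddCommGroup N] [Module k N] [FiniteDimensional k M]
    (f : M →ₗ[k] N) (q : Submodule k M) :
    finrank k (Submodule.map f q) + finrank k ↥(LinearMap.ker f ⊓ q) = finrank k q := by
  have h := LinearMap.finrank_range_add_finrank_ker (f.domRestrict q)
  rw [LinearMap.range_domRestrict] at h
  have hker2 : Submodule.comap q.subtype (LinearMap.ker f)
      = Submodule.comap q.subtype (LinearMap.ker f ⊓ q) := by
    ext ⟨x, hx⟩
    simp [hx]
  have hequiv : finrank k ↥(LinearMap.ker (f.domRestrict q))
      = finrank k ↥(LinearMap.ker f ⊓ q) := by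
    rw [LinearMap.ker_domRestrict, hker2]
    exact LinearEquiv.finrank_eq (Submodule.comapSubtypeEquivOfLe inf_le_right)
  rw [hequiv] at h
  exact h

/-- centralizer of a matrix has dimension at least n -/
lemma matrix_cent_dim [IsAlgClosed k] {p : ℕ} (g : Matrix (Fin p) (Fin p) k) :
    p ≤ finrank k (LinearMap.ker (centMap (k := k) (Matrix (Fin p) (Fin p) k) g)) := by
  set T := (Matrix.toLinAlgEquiv' : Matrix (Fin p) (Fin p) k ≃ₐ[k] Module.End k (Fin p → k))
    with hT
  set e := T.toLinearEquiv with he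
  have hmap : Submodule.map (e : Matrix (Fin p) (Fin p) k →ₗ[k] Module.End k (Fin p → k))
      (LinearMap.ker (centMap (k := k) (Matrix (Fin p) (Fin p) k) g))
      = LinearMap.ker (centMap (k := k) (Module.End k (Fin p → k)) (T g)) := by
    ext x
    rw [Submodule.mem_map_equiv]
    rw [mem_ker_centMap, mem_ker_centMap]
    have hesymm : ∀ y, e.symm y = T.symm y := fun y => rfl
    have heapp : ∀ y, e y = T y := fun y => rfl
    constructor
    · intro h
      have h2 := congrArg T h
      rw [map_mul, map_mul] at h2
      rw [hesymm, AlgEquiv.apply_symm_apply] at h2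
      exact h2
    · intro h
      have h2 := congrArg T.symm h
      rw [map_mul, map_mul, AlgEquiv.symm_apply_apply] at h2
      rw [hesymm]
      exact h2
  have hdim := cent_dim_ge (finrank k (Fin p → k)) (Fin p → k) (T g) le_rfl
  rw [← hmap] at hdim
  rw [LinearEquiv.finrank_map_eq] at hdim
  rwa [Module.finrank_fin_fun] at hdim


end Aux

/-- The conjugation representation of `SL_p(k)` on `W = End(k^p)`, i.e. on `p × p`
matrices, by `g • m = g * m * g⁻¹`. -/
noncomputable def conjRep (k : Type*) [Field k] (p : ℕ) :
    Representation k (Matrix.SpecialLinearGroup (Fin p) k) (Matrix (Fin p) (Fin p) k) where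
  toFun g := (LinearMap.mulLeft k ((g : Matrix (Fin p) (Fin p) k))).comp
    (LinearMap.mulRight k (((g⁻¹ : Matrix.SpecialLinearGroup (Fin p) k) :
      Matrix (Fin p) (Fin p) k)))
  map_one' := by
    ext m
    simp
  map_mul' g h := by
    ext m
    simp [mul_assoc]

section KerEq

variable {k : Type*} [Field k]

lemma ker_conjRep_eq {p : ℕ} (g : Matrix.SpecialLinearGroup (Fin p) k) :
    LinearMap.ker (conjRep k p g - 1)
      = LinearMap.ker (centMap (k := k) (Matrix (Fin p) (Fin p) k)
          (g : Matrix (Fin p) (Fin p) k)) := by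
  have h1 : (g : Matrix (Fin p) (Fin p) k)
      * ((g⁻¹ : Matrix.SpecialLinearGroup (Fin p) k) : Matrix (Fin p) (Fin p) k) = 1 := by
    rw [← Matrix.SpecialLinearGroup.coe_mul, mul_inv_cancel, Matrix.SpecialLinearGroup.coe_one]
  have h2 : ((g⁻¹ : Matrix.SpecialLinearGroup (Fin p) k) : Matrix (Fin p) (Fin p) k)
      * (g : Matrix (Fin p) (Fin p) k) = 1 := by
    rw [← Matrix.SpecialLinearGroup.coe_mul, inv_mul_cancel, Matrix.SpecialLinearGroup.coe_one]
  ext m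
  rw [LinearMap.mem_ker, mem_ker_centMap]
  have happ : (conjRep k p g - 1) m
      = (g : Matrix (Fin p) (Fin p) k) * (m *
        ((g⁻¹ : Matrix.SpecialLinearGroup (Fin p) k) : Matrix (Fin p) (Fin p) k)) - m := rfl
  rw [happ, sub_eq_zero]
  constructor
  · intro h
    have h3 := congrArg (fun x => x * (g : Matrix (Fin p) (Fin p) k)) h
    simp only [mul_assoc] at h3 ⊢
    rw [h2, mul_one] at h3
    exact h3
  · intro h
    rw [← mul_assoc, h, mul_assoc, h1, mul_one]

end KerEq

/-- For `G = SL_p(k)` (`char k = p > 0`) acting by conjugation on `W = End(k^p)`: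
every semisimple `g` has `dim C_W(g) ≥ p`, and for any irreducible composition factor
`V` of `W` of dimension `p² - 2` (presented as an equivariant quotient of an invariant
submodule), every `g` satisfies `dim C_V(g) ≥ p - 2`. -/
theorem conjugation_fixed_space_bound {p : ℕ} (hp : p.Prime)
    {k : Type*} [Field k] [IsAlgClosed k] (hchar : ringChar k = p)
    (V : Type*) [AddCommGroup V] [Module k V] [FiniteDimensional k V]
    (ρV : Representation k (Matrix.SpecialLinearGroup (Fin p) k) V)
    (hVdim : finrank k V = p ^ 2 - 2)
    (hVirr : ∀ X : Submodule k V, (∀ g v, v ∈ X → ρV g v ∈ X) → X = ⊥ ∨ X = ⊤)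
    (W₂ : Submodule k (Matrix (Fin p) (Fin p) k))
    (hW₂ : ∀ g, ∀ m ∈ W₂, conjRep k p g m ∈ W₂)
    (f : Matrix (Fin p) (Fin p) k →ₗ[k] V)
    (hfsurj : Submodule.map f W₂ = ⊤)
    (hfequiv : ∀ g, ∀ m ∈ W₂, f (conjRep k p g m) = ρV g (f m)) :
    (∀ g : Matrix.SpecialLinearGroup (Fin p) k,
      Module.End.IsSemisimple (Matrix.toLin' ((g : Matrix (Fin p) (Fin p) k))) →
      p ≤ finrank k (LinearMap.ker (conjRep k p g - 1))) ∧
    (∀ g : Matrix.SpecialLinearGroup (Fin p) k,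
      p - 2 ≤ finrank k (LinearMap.ker (ρV g - 1))) := by
  have hmain : ∀ g : Matrix.SpecialLinearGroup (Fin p) k,
      p ≤ finrank k (LinearMap.ker (conjRep k p g - 1)) := by
    intro g
    rw [ker_conjRep_eq]
    exact matrix_cent_dim (g : Matrix (Fin p) (Fin p) k)
  refine ⟨fun g _ => hmain g, fun g => ?_⟩
  set K := LinearMap.ker (conjRep k p g - 1) with hKdef
  set K₂ := K ⊓ W₂ with hK₂def
  -- image of K₂ is fixed by ρV g
  have h_incl : Submodule.map f K₂ ≤ LinearMap.ker (ρV g - 1) := by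
    rintro _ ⟨m, ⟨hmK, hmW⟩, rfl⟩
    rw [LinearMap.mem_ker, LinearMap.sub_apply, Module.End.one_apply, sub_eq_zero]
    have hfix : conjRep k p g m = m := by
      have := LinearMap.mem_ker.mp hmK
      rw [LinearMap.sub_apply, Module.End.one_apply, sub_eq_zero] at this
      exact this
    rw [← hfequiv g m hmW, hfix]
  -- dimension bookkeeping
  have hsupinf := Submodule.finrank_sup_add_finrank_inf_eq K W₂
  rw [← hK₂def] at hsupinf
  have hmat : finrank k (Matrix (Fin p) (Fin p) k) = p ^ 2 := by
    simp [Module.finrank_matrix, sq]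
  have hs_le : finrank k ↥(K ⊔ W₂) ≤ p ^ 2 := hmat ▸ Submodule.finrank_le (K ⊔ W₂)
  have hW₂rn := finrank_map_add_finrank_inf_ker (k := k) f W₂
  rw [hfsurj, finrank_top, hVdim] at hW₂rn
  have hK₂rn := finrank_map_add_finrank_inf_ker (k := k) f K₂
  have hker_mono : finrank k ↥(LinearMap.ker f ⊓ K₂) ≤ finrank k ↥(LinearMap.ker f ⊓ W₂) :=
    Submodule.finrank_mono (inf_le_inf_left _ inf_le_right)
  have himg : finrank k ↥(Submodule.map f K₂) ≤ finrank k ↥(LinearMap.ker (ρV g - 1)) :=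
    Submodule.finrank_mono h_incl
  have hK : p ≤ finrank k ↥K := hKdef ▸ hmain g
  have hp2 : 2 ≤ p := hp.two_le
  have hpp : p ≤ p ^ 2 := Nat.le_self_pow (by norm_num) p
  omega
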